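/- Let K = F_{p^m} with p a prime, and suppose α : K → GL(K_K) = K* (identified with scalar multiplications, i.e., the group of K-linear automorphisms of K) is a map satisfying the cocycle condition α(x+y) = α(α(y)(x))·α(y) for all x, y ∈ K. Then α(x) = 1 for all x ∈ K. -/

import Mathlib

/-- Type synonym for the twisted group structure. -/
def Stmt14Gp (K : Type*) := K

/-- Identity map into the type synonym. -/
def Stmt14Gp.mk {K : Type*} (x : K) : Stmt14Gp K := x

/-- Identity map out of the type synonym. -/
def Stmt14Gp.val {K : Type*} (x : Stmt14Gp K) : K := x

theorem stmt14_key {K : Type*} [Field K] (α : K → Kˣ)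
    (h : ∀ x y : K, α (x + y) = α ((α y : K) * x) * α y) (x y : K) :
    α ((α y : K)⁻¹ * x + y) = α x * α y := by
  have := h ((α y : K)⁻¹ * x) y
  rwa [mul_inv_cancel_left₀ (α y).ne_zero] at this

theorem stmt14_zero {K : Type*} [Field K] (α : K → Kˣ)
    (h : ∀ x y : K, α (x + y) = α ((α y : K) * x) * α y) : α 0 = 1 := by
  have h00 := h 0 0
  simp only [add_zero, mul_zero] at h00
  have : α 0 * 1 = α 0 * α 0 := by rw [mul_one]; exact h00
  exact (mul_left_cancel this).symm

def stmt14Group {K : Type*} [Field K] (α : K → Kˣ)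
    (h : ∀ x y : K, α (x + y) = α ((α y : K) * x) * α y) : Group (Stmt14Gp K) where
  mul a b := Stmt14Gp.mk ((α b.val : K)⁻¹ * a.val + b.val)
  one := Stmt14Gp.mk (0 : K)
  inv a := Stmt14Gp.mk (-((α a.val : K) * a.val))
  mul_assoc a b c := by
    show Stmt14Gp.mk ((α c.val : K)⁻¹ * ((α b.val : K)⁻¹ * a.val + b.val) + c.val)
        = Stmt14Gp.mk ((α ((α c.val : K)⁻¹ * b.val + c.val) : K)⁻¹
            * a.val + ((α c.val : K)⁻¹ * b.val + c.val))
    rw [stmt14_key α h b.val c.val]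
    show Stmt14Gp.mk ((α c.val : K)⁻¹ * ((α b.val : K)⁻¹ * a.val + b.val) + c.val)
        = Stmt14Gp.mk (((α b.val * α c.val : Kˣ) : K)⁻¹
            * a.val + ((α c.val : K)⁻¹ * b.val + c.val))
    unfold Stmt14Gp.mk
    push_cast
    ring_nf
    rfl
  one_mul a := by
    show Stmt14Gp.mk ((α a.val : K)⁻¹ * (0 : K) + a.val) = a
    unfold Stmt14Gp.mk Stmt14Gp.val
    simp
    exact zero_add (M := K) a
  mul_one a := by
    show Stmt14Gp.mk ((α (0 : K) : K)⁻¹ * a.val + 0) = a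
    unfold Stmt14Gp.mk Stmt14Gp.val
    rw [stmt14_zero α h]
    simp
    exact one_mul (M := K) a
  inv_mul_cancel a := by
    show Stmt14Gp.mk ((α a.val : K)⁻¹ * (-((α a.val : K) * a.val)) + a.val)
        = Stmt14Gp.mk (0 : K)
    unfold Stmt14Gp.mk
    rw [mul_neg, inv_mul_cancel_left₀ (α (Stmt14Gp.val a)).ne_zero, neg_add_cancel]

theorem stmt14_pow {K : Type*} [Field K] (α : K → Kˣ)
    (h : ∀ x y : K, α (x + y) = α ((α y : K) * x) * α y) (x : Stmt14Gp K) (n : ℕ) :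
    letI := stmt14Group α h
    α (x ^ n : Stmt14Gp K).val = α x.val ^ n := by
  letI := stmt14Group α h
  induction n with
  | zero =>
      rw [pow_zero, pow_zero]
      exact stmt14_zero α h
  | succ n ih =>
      rw [pow_succ]
      show α (Stmt14Gp.mk ((α x.val : K)⁻¹ * (x ^ n : Stmt14Gp K).val + x.val)).val = _
      show α ((α x.val : K)⁻¹ * (x ^ n : Stmt14Gp K).val + x.val) = _
      rw [stmt14_key α h, ih, pow_succ]

/-- For `K = F_{p^m}`, if `α : K → K*` (identifying `GL(K_K)` with `K*`
acting by scalar multiplication) satisfies the cocycle condition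
`α(x+y) = α(α(y)(x)) · α(y)` for all `x, y ∈ K`, then `α(x) = 1` for all `x`. -/
theorem stmt14 (p m : ℕ) (hp : p.Prime) (K : Type*) [Field K] [Fintype K]
    (hK : Fintype.card K = p ^ m) (α : K → Kˣ)
    (h : ∀ x y : K, α (x + y) = α ((α y : K) * x) * α y) :
    ∀ x : K, α x = 1 := by
  intro x
  letI : Group (Stmt14Gp K) := stmt14Group α h
  letI : Fintype (Stmt14Gp K) := ‹Fintype K›
  have hcard : Fintype.card (Stmt14Gp K) = p ^ m := hK
  set g : Stmt14Gp K := Stmt14Gp.mk x with hg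
  have hgx : g.val = x := rfl
  -- α x ^ (p ^ m) = 1
  have h1 : α x ^ (p ^ m) = 1 := by
    have hpw : g ^ Fintype.card (Stmt14Gp K) = 1 := pow_card_eq_one
    rw [hcard] at hpw
    have := stmt14_pow α h g (p ^ m)
    rw [hpw, hgx] at this
    have h1v : (1 : Stmt14Gp K).val = (0 : K) := rfl
    rw [h1v, stmt14_zero α h] at this
    exact this.symm
  -- α x ^ (p ^ m - 1) = 1
  have h2 : α x ^ (p ^ m - 1) = 1 := by
    letI : DecidableEq K := Classical.decEq K
    have hpw : (α x) ^ Fintype.card Kˣ = 1 := pow_card_eq_one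
    rwa [Fintype.card_units, hK] at hpw
  have hord1 : orderOf (α x) ∣ p ^ m := orderOf_dvd_of_pow_eq_one h1
  have hord2 : orderOf (α x) ∣ p ^ m - 1 := orderOf_dvd_of_pow_eq_one h2
  have hpm : 1 ≤ p ^ m := Nat.one_le_pow _ _ hp.pos
  have hcop : Nat.Coprime (p ^ m) (p ^ m - 1) := by
    have heq : p ^ m - 1 + 1 = p ^ m := Nat.sub_add_cancel hpm
    have : Nat.Coprime (p ^ m - 1 + 1) (p ^ m - 1) := by simp
    rwa [heq] at this
  have hdvd : orderOf (α x) ∣ 1 := hcop ▸ Nat.dvd_gcd hord1 hord2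
  exact orderOf_eq_one_iff.mp (Nat.dvd_one.mp hdvd)
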